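/- Let d, r ≥ 2, k = d+1, and let s_1, …, s_{d+1} ∈ R^d be the vertices of a regular simplex inscribed in the unit sphere (unit vectors with ⟨s_i, s_j⟩ = −1/d for i ≠ j). Then for every nonzero w ∈ R^d and every θ with 0 < sin θ < (8dr)^{−d}, the linear span of {g(x) : x ∈ W_θ} is a proper subspace of R^d; that is, in this setting one may take β₁ = (8dr)^{−d}. -/

import Mathlib

attribute [local instance] Classical.propDecidable

open scoped RealInnerProductSpace
open scoped Matrix

/-- The defining condition of the space `X` of swaps: `x ∈ ℤ^k` with all `|x i| ≤ 2r-2`,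
`∑ x i = 0` and `∑ |x i| ≤ 4r-4`. -/
def SwapCond (k r : ℕ) (x : Fin k → ℤ) : Prop :=
  (∀ i, |x i| ≤ 2 * (r : ℤ) - 2) ∧ (∑ i, x i = 0) ∧ (∑ i, |x i| ≤ 4 * (r : ℤ) - 4)

/-- `g x = ∑ i, x i • s i`. -/
noncomputable def gMap {k d : ℕ} (s : Fin k → EuclideanSpace ℝ (Fin d))
    (x : Fin k → ℤ) : EuclideanSpace ℝ (Fin d) :=
  ∑ i, (x i : ℝ) • s i

/-- The sine of the angle `θ(x)` between `g x` and the hyperplane `w^⊥`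
(`0` by convention when `g x = 0`, matching division-by-zero conventions). -/
noncomputable def sinAngle {k d : ℕ} (s : Fin k → EuclideanSpace ℝ (Fin d))
    (w : EuclideanSpace ℝ (Fin d)) (x : Fin k → ℤ) : ℝ :=
  |⟪gMap s x, w⟫| / (‖gMap s x‖ * ‖w‖)

/-- The constant `β₀ = L / min {‖g x‖ : x ∈ X, g x ≠ 0}`, with `L = 8(r-1)²`. -/
noncomputable def beta0 (k r : ℕ) {d : ℕ} (s : Fin k → EuclideanSpace ℝ (Fin d)) : ℝ :=
  8 * ((r : ℝ) - 1) ^ 2 /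
    sInf {t : ℝ | ∃ x, SwapCond k r x ∧ gMap s x ≠ 0 ∧ t = ‖gMap s x‖}

/-- Column-wise Hadamard-type bound on determinants. -/
lemma aux_abs_det_le {n : ℕ} (A : Matrix (Fin n) (Fin n) ℝ) (b : Fin n → ℝ)
    (h : ∀ i j, |A i j| ≤ b j) :
    |A.det| ≤ (Nat.factorial n : ℝ) * ∏ j, b j := by
  rw [Matrix.det_apply]
  refine (Finset.abs_sum_le_sum_abs _ _).trans ?_
  have key : ∀ σ : Equiv.Perm (Fin n), |Equiv.Perm.sign σ • ∏ i, A (σ i) i| ≤ ∏ j, b j := by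
    intro σ
    have : |Equiv.Perm.sign σ • ∏ i, A (σ i) i| = |∏ i, A (σ i) i| := by
      rcases Int.units_eq_one_or (Equiv.Perm.sign σ) with h1 | h1 <;> simp [h1]
    rw [this, Finset.abs_prod]
    exact Finset.prod_le_prod (fun i _ => abs_nonneg _) (fun i _ => h (σ i) i)
  refine (Finset.sum_le_sum fun σ _ => key σ).trans ?_
  rw [Finset.sum_const, Finset.card_univ, Fintype.card_perm, Fintype.card_fin, nsmul_eq_mul]

lemma aux_coord_le_norm {d : ℕ} (x : EuclideanSpace ℝ (Fin d)) (i : Fin d) :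
    |x i| ≤ ‖x‖ := by
  rw [EuclideanSpace.norm_eq, ← Real.sqrt_sq_eq_abs]
  apply Real.sqrt_le_sqrt
  have := Finset.single_le_sum (f := fun j => ‖x j‖ ^ 2)
    (fun j _ => sq_nonneg _) (Finset.mem_univ i)
  simpa using this

lemma aux_fact_le {d : ℕ} (hd : 1 ≤ d) : Nat.factorial d ≤ d ^ (d - 1) := by
  induction d with
  | zero => simp
  | succ n ih =>
    rcases Nat.eq_zero_or_pos n with h | h
    · subst h; simp
    · calc Nat.factorial (n+1) = (n+1) * Nat.factorial n := rfl
        _ ≤ (n+1) * n ^ (n-1) := Nat.mul_le_mul_left _ (ih h)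
        _ ≤ (n+1) * (n+1) ^ (n-1) := Nat.mul_le_mul_left _ (Nat.pow_le_pow_left (by omega) _)
        _ = (n+1) ^ (n-1+1) := by rw [pow_succ]; ring
        _ = (n+1) ^ n := by congr 1; omega

section
variable {d : ℕ} (s : Fin (d + 1) → EuclideanSpace ℝ (Fin d))

lemma aux_sum_s_eq_zero (hd : 1 ≤ d) (hs : ∀ i, ‖s i‖ = 1)
    (hs' : ∀ i j, i ≠ j → ⟪s i, s j⟫ = -1 / d) : ∑ i, s i = 0 := by
  have hdd : (d : ℝ) ≠ 0 := by positivity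
  have h1 : ∀ i : Fin (d+1), ∑ j, ⟪s i, s j⟫ = 0 := by
    intro i
    have he : ∀ j : Fin (d+1), ⟪s i, s j⟫
        = (-1/d : ℝ) + if i = j then (1:ℝ) + 1/(d:ℝ) else 0 := by
      intro j
      by_cases h : i = j
      · subst h
        rw [real_inner_self_eq_norm_sq, hs i]
        simp; field_simp; ring
      · rw [hs' i j h]; simp [h]
    rw [Finset.sum_congr rfl fun j _ => he j, Finset.sum_add_distrib, Finset.sum_const,
      Finset.sum_ite_eq]
    simp [Finset.card_univ]
    field_simp
    ring
  have h2 : ⟪∑ i, s i, ∑ i, s i⟫ = 0 := by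
    rw [sum_inner]
    exact Finset.sum_eq_zero fun i _ => by rw [inner_sum]; exact h1 i
  exact inner_self_eq_zero.mp h2

lemma aux_gram_det (hd : 1 ≤ d) (hs : ∀ i, ‖s i‖ = 1)
    (hs' : ∀ i j, i ≠ j → ⟪s i, s j⟫ = -1 / d) :
    (1 : ℝ) / d ≤ ((Matrix.of fun i j : Fin d => s (Fin.castSucc j) i).det) ^ 2 := by
  set S : Matrix (Fin d) (Fin d) ℝ := Matrix.of fun i j : Fin d => s (Fin.castSucc j) i with hS
  have hdd : (0 : ℝ) < d := by positivity
  have hG : Sᵀ * S = ((d + 1 : ℝ)/d) •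
      (1 + Matrix.replicateCol Unit (fun _ => (1:ℝ)) * Matrix.replicateRow Unit (fun _ => (-1/(d+1) : ℝ))) := by
    ext j k
    have hmul : (Matrix.replicateCol Unit (fun _ => (1:ℝ)) * Matrix.replicateRow Unit (fun _ => (-1/(d+1) : ℝ))) j k
        = -1/(d+1) := by
      rw [Matrix.mul_apply]
      simp
    have hjk : (Sᵀ * S) j k = ⟪s (Fin.castSucc j), s (Fin.castSucc k)⟫ := by
      rw [Matrix.mul_apply, PiLp.inner_apply]
      simp [hS, mul_comm]
    by_cases h : j = k
    · subst h
      rw [hjk, real_inner_self_eq_norm_sq, hs]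
      rw [Matrix.smul_apply, Matrix.add_apply, Matrix.one_apply_eq, hmul]
      rw [smul_eq_mul]; field_simp; ring
    · have hne : Fin.castSucc j ≠ Fin.castSucc k := by
        simpa [Fin.castSucc_inj] using h
      rw [hjk, hs' _ _ hne]
      rw [Matrix.smul_apply, Matrix.add_apply, Matrix.one_apply_ne h, hmul]
      rw [smul_eq_mul]; field_simp
      ring
  have hdet : (S.det) ^ 2 = ((d+1:ℝ)/d) ^ d * (1/(d+1)) := by
    have h1 : (Sᵀ * S).det = (S.det) ^ 2 := by
      rw [Matrix.det_mul, Matrix.det_transpose, sq]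
    rw [← h1, hG, Matrix.det_smul, Matrix.det_one_add_replicateCol_mul_replicateRow]
    have : ((fun _ : Fin d => (-1/(d+1) : ℝ)) ⬝ᵥ (fun _ : Fin d => (1:ℝ))) = -d/(d+1) := by
      simp [dotProduct, Finset.card_univ]
      ring
    rw [this]
    simp [Fintype.card_fin]
    ring_nf
    field_simp
    left; ring
  rw [hdet]
  have h2 : ((d+1:ℝ)/d) ^ d ≥ (d+1)/d := by
    apply le_self_pow₀
    · rw [le_div_iff₀ hdd]; linarith
    · omega
  calc (1:ℝ)/d = ((d+1)/d) * (1/(d+1)) := by field_simp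
    _ ≤ ((d+1:ℝ)/d) ^ d * (1/(d+1)) := by
        apply mul_le_mul_of_nonneg_right h2
        positivity
end

set_option maxHeartbeats 2000000 in
theorem simplex_beta1_explicit (d r : ℕ) (hd : 2 ≤ d) (hr : 2 ≤ r)
    (s : Fin (d + 1) → EuclideanSpace ℝ (Fin d))
    (hs : ∀ i, ‖s i‖ = 1)
    (hs' : ∀ i j, i ≠ j → ⟪s i, s j⟫ = -1 / d) :
    ∀ w : EuclideanSpace ℝ (Fin d), w ≠ 0 →
      ∀ θ : ℝ, 0 < θ → θ ≤ Real.pi / 2 →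
        Real.sin θ < ((8 * (d : ℝ) * r) ^ d)⁻¹ →
        Submodule.span ℝ
          {v : EuclideanSpace ℝ (Fin d) |
            ∃ x, SwapCond (d + 1) r x ∧ sinAngle s w x < Real.sin θ ∧ v = gMap s x} ≠ ⊤ := by
  intro w hw θ hθ0 hθπ hθβ hspan
  classical
  have hd1 : 1 ≤ d := le_trans one_le_two hd
  have hsum0 := aux_sum_s_eq_zero s hd1 hs hs'
  set ε := Real.sin θ with hεdef
  have hε0 : 0 < ε :=
    Real.sin_pos_of_pos_of_lt_pi hθ0 (lt_of_le_of_lt hθπ (half_lt_self Real.pi_pos))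
  have hr4 : (1:ℝ) ≤ 4 * r := by
    have : (2:ℝ) ≤ r := by exact_mod_cast hr
    linarith
  -- rewrite gMap in terms of the first d vectors
  have hgrw : ∀ x : Fin (d+1) → ℤ, gMap s x
      = ∑ j : Fin d, ((x (Fin.castSucc j) - x (Fin.last d) : ℤ) : ℝ) • s (Fin.castSucc j) := by
    intro x
    have h1 : gMap s x = ∑ i, ((x i - x (Fin.last d) : ℤ) : ℝ) • s i := by
      unfold gMap
      rw [eq_comm]
      calc ∑ i, ((x i - x (Fin.last d) : ℤ) : ℝ) • s i
          = ∑ i, ((x i : ℝ) • s i - (x (Fin.last d) : ℝ) • s i) := by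
            refine Finset.sum_congr rfl fun i _ => ?_
            push_cast
            rw [sub_smul]
        _ = (∑ i, (x i : ℝ) • s i) - (x (Fin.last d) : ℝ) • ∑ i, s i := by
            rw [Finset.sum_sub_distrib, Finset.smul_sum]
        _ = ∑ i, (x i : ℝ) • s i := by rw [hsum0, smul_zero, sub_zero]
    rw [h1, Fin.sum_univ_castSucc]
    simp
  -- norm bound
  have hgnorm : ∀ x, SwapCond (d+1) r x → ‖gMap s x‖ ≤ 4 * r := by
    intro x hx
    unfold gMap
    refine (norm_sum_le _ _).trans ?_
    have he : ∀ i : Fin (d+1), ‖(x i : ℝ) • s i‖ = ((|x i| : ℤ) : ℝ) := by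
      intro i; rw [norm_smul, hs i, mul_one]; simp
    rw [Finset.sum_congr rfl fun i _ => he i]
    have h2 : ((∑ i, |x i| : ℤ) : ℝ) ≤ ((4 * r - 4 : ℤ) : ℝ) := by exact_mod_cast hx.2.2
    push_cast at h2 ⊢
    linarith
  -- extract a basis from the spanning set
  obtain ⟨t, hts, htspan, htli⟩ := exists_linearIndependent ℝ
    {v : EuclideanSpace ℝ (Fin d) |
      ∃ x, SwapCond (d + 1) r x ∧ sinAngle s w x < Real.sin θ ∧ v = gMap s x}
  rw [hspan] at htspan
  haveI : Fintype t := (LinearIndependent.setFinite htli).fintype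
  let b : Module.Basis t ℝ (EuclideanSpace ℝ (Fin d)) :=
    Module.Basis.mk htli (by rw [Subtype.range_coe, htspan])
  let e : t ≃ Fin d := b.indexEquiv (PiLp.basisFun 2 ℝ (Fin d))
  let b' : Module.Basis (Fin d) ℝ (EuclideanSpace ℝ (Fin d)) := b.reindex e
  set T : Fin d → EuclideanSpace ℝ (Fin d) := fun j => b' j with hTdef
  have hTmem : ∀ j, T j ∈ {v : EuclideanSpace ℝ (Fin d) |
      ∃ x, SwapCond (d + 1) r x ∧ sinAngle s w x < Real.sin θ ∧ v = gMap s x} := by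
    intro j
    have h1 : T j = ((e.symm j : t) : EuclideanSpace ℝ (Fin d)) := by
      rw [hTdef]
      show b' j = _
      rw [Module.Basis.reindex_apply, Module.Basis.mk_apply]
    rw [h1]
    exact hts (e.symm j).2
  choose X hX1 hX2 hX3 using hTmem
  -- the coefficient matrix
  set M : Matrix (Fin d) (Fin d) ℝ := Matrix.of fun i j : Fin d => T j i with hMdef
  have hM : M = (PiLp.basisFun 2 ℝ (Fin d)).toMatrix ⇑b' := by
    ext i j
    rw [Module.Basis.toMatrix_apply, PiLp.basisFun_repr]
    rfl
  have hMdet : M.det ≠ 0 := by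
    haveI := Module.Basis.invertibleToMatrix (PiLp.basisFun 2 ℝ (Fin d)) b'
    rw [hM]
    exact (Matrix.isUnit_det_of_invertible _).ne_zero
  set wv : Fin d → ℝ := fun i => w i with hwvdef
  set c : Fin d → ℝ := fun j => b'.repr w j with hcdef
  have hsumrep : ∑ j, c j • T j = w := by
    exact Module.Basis.sum_repr b' w
  have hMc : M *ᵥ c = wv := by
    funext i
    have hwi : w i = ∑ j, c j * T j i := by
      conv_lhs => rw [← hsumrep]
      rw [WithLp.ofLp_sum, Finset.sum_apply]
      rfl
    simp only [Matrix.mulVec, dotProduct, hwvdef]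
    rw [hwi]
    refine Finset.sum_congr rfl fun j _ => ?_
    show T j i * c j = c j * T j i
    exact mul_comm _ _
  have hcram : ∀ j, M.det * c j = (M.updateCol j wv).det := by
    intro j
    have h1 : M.det • c = M.cramer wv := by
      rw [← hMc, Matrix.cramer_eq_adjugate_mulVec, Matrix.mulVec_mulVec, Matrix.adjugate_mul,
        Matrix.smul_mulVec, Matrix.one_mulVec]
    have h2 := congrFun h1 j
    simpa [Matrix.cramer_apply] using h2
  -- entry bounds
  have hMent : ∀ i j, |M i j| ≤ 4 * (r:ℝ) := by
    intro i j
    refine (aux_coord_le_norm (T j) i).trans ?_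
    rw [hX3 j]
    exact hgnorm (X j) (hX1 j)
  have hwvent : ∀ i, |wv i| ≤ ‖w‖ := fun i => aux_coord_le_norm w i
  set A : ℝ := (Nat.factorial d : ℝ) * (‖w‖ * (4*(r:ℝ)) ^ (d-1)) with hAdef
  have hcj : ∀ j, |M.det| * |c j| ≤ A := by
    intro j
    rw [← abs_mul, hcram j]
    have hb := aux_abs_det_le (M.updateCol j wv)
      (fun k => if k = j then ‖w‖ else 4*(r:ℝ)) ?_
    · refine hb.trans ?_
      have hprod : (∏ k, if k = j then ‖w‖ else 4*(r:ℝ)) = ‖w‖ * (4*(r:ℝ)) ^ (d-1) := by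
        rw [← Finset.mul_prod_erase _ _ (Finset.mem_univ j), if_pos rfl]
        congr 1
        rw [Finset.prod_congr rfl (fun k hk => if_neg (Finset.ne_of_mem_erase hk)),
          Finset.prod_const, Finset.card_erase_of_mem (Finset.mem_univ j),
          Finset.card_univ, Fintype.card_fin]
      rw [hprod, hAdef]
    · intro i k
      rw [Matrix.updateCol_apply]
      by_cases h : k = j
      · simp only [if_pos h]
        exact hwvent i
      · simp only [if_neg h]
        exact hMent i k
  -- determinant lower bound
  set S : Matrix (Fin d) (Fin d) ℝ := Matrix.of fun i j : Fin d => s (Fin.castSucc j) i with hSdef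
  set N : Matrix (Fin d) (Fin d) ℤ :=
    Matrix.of fun j k : Fin d => X k (Fin.castSucc j) - X k (Fin.last d) with hNdef
  have hMSN : M = S * N.map (Int.cast : ℤ → ℝ) := by
    ext i k
    rw [Matrix.mul_apply]
    have h1 : M i k = (gMap s (X k)) i := by
      show T k i = _
      rw [hX3 k]
    rw [h1, hgrw (X k), WithLp.ofLp_sum, Finset.sum_apply]
    refine Finset.sum_congr rfl fun j _ => ?_
    simp [hSdef, hNdef, Matrix.map_apply, mul_comm]
  have hdetM : M.det = S.det * ((N.det : ℤ) : ℝ) := by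
    rw [hMSN, Matrix.det_mul]
    congr 1
    exact (RingHom.map_det (Int.castRingHom ℝ) N).symm
  have hNdet : N.det ≠ 0 := by
    intro h
    apply hMdet
    rw [hdetM, h]
    simp
  have hNabs : (1:ℝ) ≤ |((N.det : ℤ) : ℝ)| := by
    have := Int.one_le_abs hNdet
    exact_mod_cast this
  have hS2 : (1:ℝ)/d ≤ S.det ^ 2 := aux_gram_det s hd1 hs hs'
  have hdr : (1:ℝ) ≤ d := by exact_mod_cast hd1
  have hdlb : (1:ℝ) ≤ (d:ℝ) * |M.det| := by
    have hd0 : (0:ℝ) < d := by positivity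
    have h1 : |M.det| = |S.det| * |((N.det : ℤ) : ℝ)| := by rw [hdetM, abs_mul]
    have h2 : |S.det| ≤ |M.det| := by
      rw [h1]
      exact le_mul_of_one_le_right (abs_nonneg _) hNabs
    have h3 : (1:ℝ) ≤ (d:ℝ) * |S.det| := by
      have h1' : (1:ℝ) ≤ (d:ℝ) * S.det ^ 2 := by
        rw [div_le_iff₀ hd0] at hS2
        linarith
      by_contra hcon
      push_neg at hcon
      have ha0 : 0 ≤ |S.det| := abs_nonneg _
      have ha1 : |S.det| ≤ (d:ℝ) * |S.det| := le_mul_of_one_le_left ha0 hdr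
      have hsq : (d:ℝ) * S.det ^ 2 = ((d:ℝ) * |S.det|) * |S.det| := by
        rw [← sq_abs]; ring
      nlinarith [hcon, ha0, ha1, hsq, h1']
    calc (1:ℝ) ≤ (d:ℝ) * |S.det| := h3
      _ ≤ (d:ℝ) * |M.det| := mul_le_mul_of_nonneg_left h2 hd0.le
  -- inner product bounds
  have hTne : ∀ j, T j ≠ 0 := fun j => by
    rw [hTdef]
    exact b'.ne_zero j
  have hTin : ∀ j, |⟪T j, w⟫| ≤ ε * (4*(r:ℝ)) * ‖w‖ := by
    intro j
    have hpos : 0 < ‖T j‖ * ‖w‖ :=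
      mul_pos (norm_pos_iff.mpr (hTne j)) (norm_pos_iff.mpr hw)
    have h1 := hX2 j
    rw [sinAngle, ← hX3 j] at h1
    have h2 : |⟪T j, w⟫| < ε * (‖T j‖ * ‖w‖) := (div_lt_iff₀ hpos).mp h1
    have h3 : ‖T j‖ ≤ 4 * (r:ℝ) := by rw [hX3 j]; exact hgnorm (X j) (hX1 j)
    calc |⟪T j, w⟫| ≤ ε * (‖T j‖ * ‖w‖) := h2.le
      _ ≤ ε * ((4*(r:ℝ)) * ‖w‖) := by
          apply mul_le_mul_of_nonneg_left _ hε0.le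
          exact mul_le_mul_of_nonneg_right h3 (norm_nonneg w)
      _ = ε * (4*(r:ℝ)) * ‖w‖ := by ring
  -- final computation
  have hw2 : ‖w‖ ^ 2 = ∑ j, c j * ⟪T j, w⟫ := by
    have h0 : ⟪w, w⟫ = ∑ j, c j * ⟪T j, w⟫ := by
      nth_rewrite 1 [← hsumrep]
      rw [sum_inner]
      exact Finset.sum_congr rfl fun j _ => real_inner_smul_left _ _ _
    rw [← real_inner_self_eq_norm_sq, h0]
  have hcb : ∀ j, |c j| ≤ (d:ℝ) * A := by
    intro j
    have h1 := hcj j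
    calc |c j| = 1 * |c j| := (one_mul _).symm
      _ ≤ ((d:ℝ) * |M.det|) * |c j| := mul_le_mul_of_nonneg_right hdlb (abs_nonneg _)
      _ = (d:ℝ) * (|M.det| * |c j|) := by ring
      _ ≤ (d:ℝ) * A := mul_le_mul_of_nonneg_left h1 (by positivity)
  have hwb : ‖w‖ ^ 2 ≤ (d:ℝ) * ((d:ℝ) * A * (ε * (4*(r:ℝ)) * ‖w‖)) := by
    rw [hw2]
    calc ∑ j, c j * ⟪T j, w⟫ ≤ ∑ j, |c j| * |⟪T j, w⟫| := by
          refine Finset.sum_le_sum fun j _ => ?_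
          calc c j * ⟪T j, w⟫ ≤ |c j * ⟪T j, w⟫| := le_abs_self _
            _ = |c j| * |⟪T j, w⟫| := abs_mul _ _
      _ ≤ ∑ _j : Fin d, (d:ℝ) * A * (ε * (4*(r:ℝ)) * ‖w‖) := by
          refine Finset.sum_le_sum fun j _ => ?_
          have hA0 : 0 ≤ (d:ℝ) * A := le_trans (abs_nonneg _) (hcb j)
          exact mul_le_mul (hcb j) (hTin j) (abs_nonneg _) hA0
      _ = (d:ℝ) * ((d:ℝ) * A * (ε * (4*(r:ℝ)) * ‖w‖)) := by
          rw [Finset.sum_const, Finset.card_univ, Fintype.card_fin, nsmul_eq_mul]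
  have hwpos : 0 < ‖w‖ := norm_pos_iff.mpr hw
  set K : ℝ := (d:ℝ)^2 * (Nat.factorial d : ℝ) * (4*(r:ℝ))^d with hKdef
  have hKw : (d:ℝ) * ((d:ℝ) * A * (ε * (4*(r:ℝ)) * ‖w‖)) = K * ε * ‖w‖^2 := by
    have hpow : (4*(r:ℝ)) ^ (d-1) * (4*(r:ℝ)) = (4*(r:ℝ)) ^ d := by
      rw [← pow_succ]
      congr 1
      omega
    rw [hAdef, hKdef, ← hpow]
    ring
  have hKε : 1 ≤ K * ε := by
    have h1 := hwb
    rw [hKw] at h1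
    have h2 : 0 < ‖w‖ ^ 2 := by positivity
    nlinarith [h1, h2]
  -- the key numeric bound : K ≤ (8dr)^d
  have hknum : K ≤ ((8 * (d:ℝ) * r) ^ d) := by
    have h8 : (8 * (d:ℝ) * r) ^ d = ((2*(d:ℝ))^d) * (4*(r:ℝ))^d := by
      rw [← mul_pow]
      congr 1
      ring
    rw [h8, hKdef]
    have hnat : d^2 * Nat.factorial d ≤ (2*d)^d := by
      calc d^2 * Nat.factorial d ≤ d^2 * d^(d-1) := Nat.mul_le_mul_left _ (aux_fact_le hd1)
        _ = d^(d+1) := by rw [← pow_add]; congr 1; omega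
        _ = d * d^d := by rw [← pow_succ']
        _ ≤ 2^d * d^d := Nat.mul_le_mul_right _ (Nat.lt_two_pow_self (n := d)).le
        _ = (2*d)^d := by rw [mul_pow]
    have hnat' : ((d:ℝ)^2 * (Nat.factorial d : ℝ)) ≤ (2*(d:ℝ))^d := by exact_mod_cast hnat
    have hp : (0:ℝ) ≤ (4*(r:ℝ))^d := by positivity
    nlinarith [hp]
  have hKpos : 0 < K := by
    rw [hKdef]
    have : (0:ℝ) < Nat.factorial d := by exact_mod_cast Nat.factorial_pos d
    positivity
  have hfinal : K * ε < 1 := by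
    have h1 : K * ε < K * ((8 * (d:ℝ) * r) ^ d)⁻¹ := by
      exact mul_lt_mul_of_pos_left hθβ hKpos
    have h2 : K * ((8 * (d:ℝ) * r) ^ d)⁻¹ ≤ 1 := by
      have hpos : (0:ℝ) < (8 * (d:ℝ) * r) ^ d := by positivity
      rw [← div_eq_mul_inv]
      exact (div_le_one hpos).mpr hknum
    linarith
  linarith
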